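/- For a real number λ > 0 and integers 0 ≤ k ≤ l, one has ∑_{i=0}^{k} ( i! · C(l,i) ) / ( (λ)_{2i} · (λ+2i+1)_{l-i} ) = 1/(λ)_l − (l−k)_{k+1}/(λ)_{l+k+1}, where (x)_p is the Pochhammer symbol. -/

import Mathlib

open Finset

/-- Pochhammer (rising factorial) symbol `(x)_p = x (x+1) ⋯ (x+p-1)`. -/
noncomputable def poch (x : ℝ) (p : ℕ) : ℝ := ∏ i ∈ Finset.range p, (x + i)

lemma poch_zero (x : ℝ) : poch x 0 = 1 := by simp [poch]

lemma poch_succ (x : ℝ) (p : ℕ) : poch x (p + 1) = poch x p * (x + p) := by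
  simp [poch, Finset.prod_range_succ]

lemma poch_add (x : ℝ) (p q : ℕ) : poch x (p + q) = poch x p * poch (x + p) q := by
  unfold poch; rw [Finset.prod_range_add]; congr 1
  exact Finset.prod_congr rfl fun i _ => by push_cast; ring

lemma poch_pos (x : ℝ) (hx : 0 < x) (p : ℕ) : 0 < poch x p :=
  Finset.prod_pos fun i _ => by positivity

lemma poch_natCast (n p : ℕ) : poch (n : ℝ) p = (n.ascFactorial p : ℕ) := by
  induction p with
  | zero => simp [poch]
  | succ p ih => rw [poch_succ, ih, Nat.ascFactorial_succ]; push_cast; ring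

theorem stmt3 (lam : ℝ) (hlam : 0 < lam) (k l : ℕ) (hkl : k ≤ l) :
    ∑ i ∈ Finset.Icc 0 k,
        ((Nat.factorial i : ℝ) * (l.choose i : ℝ)) /
          (poch lam (2 * i) * poch (lam + 2 * i + 1) (l - i)) =
      1 / poch lam l - poch ((l : ℝ) - (k : ℝ)) (k + 1) / poch lam (l + k + 1) := by
  induction k with
  | zero =>
    simp only [Finset.Icc_self, Finset.sum_singleton]
    norm_num [poch_zero]
    have h1 : poch (↑l : ℝ) 1 = (l : ℝ) := by simp [poch_succ, poch_zero]
    have h2 : poch lam (l + 1) = poch lam l * (lam + l) := poch_succ lam l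
    have h3 : poch lam (l + 1) = lam * poch (lam + 1) l := by
      rw [show l + 1 = 1 + l by ring, poch_add]
      norm_num [poch_succ, poch_zero]
    have hL : (0:ℝ) < poch lam l := poch_pos _ hlam _
    have hX : (0:ℝ) < poch (lam + 1) l := poch_pos _ (by linarith) _
    have h4 : poch (lam+1) l = poch lam l * (lam + l) / lam := by
      rw [← h2, h3]; field_simp
    rw [h1, h2, h4]
    field_simp
    ring
  | succ k ih =>
    have hk : k ≤ l := by omega
    rw [Finset.sum_Icc_succ_top (Nat.zero_le _), ih hk]
    set L := poch lam l with hL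
    set P := poch lam (l + k + 1) with hP
    set Q := poch ((l : ℝ) - (k : ℝ)) (k + 1) with hQd
    set A := poch lam (2 * (k + 1)) with hA
    set B := poch (lam + 2 * ((k:ℕ)+1 : ℕ) + 1) (l - (k + 1)) with hB
    have hcast : ((l : ℝ) - (k : ℝ)) = ((l - k : ℕ) : ℝ) := by
      push_cast [Nat.cast_sub hk]; ring
    have hnum : ((k+1).factorial : ℝ) * (l.choose (k+1) : ℝ) = Q := by
      rw [hQd, hcast, poch_natCast]
      have h5 : l.descFactorial (k+1) = (l - k).ascFactorial (k+1) := by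
        have h6 := Nat.add_descFactorial_eq_ascFactorial (l - (k+1)) (k+1)
        rw [Nat.sub_add_cancel hkl] at h6
        rw [h6]; congr 1; omega
      rw [← h5, Nat.descFactorial_eq_factorial_mul_choose]
      push_cast; ring
    have hdec : poch lam (l + (k+1) + 1) = A * (lam + 2*(k:ℝ) + 2) * B := by
      rw [hA, hB, show l + (k+1) + 1 = 2*(k+1) + (l - k) by omega, poch_add,
        show l - k = 1 + (l - (k+1)) by omega, poch_add]
      simp only [poch_succ, poch_zero]
      push_cast; ring_nf
    have hdec2 : poch lam (l + (k+1) + 1) = P * (lam + (l:ℝ) + (k:ℝ) + 1) := by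
      rw [hP, show l + (k+1) + 1 = (l + k + 1) + 1 by ring, poch_succ]
      push_cast; ring
    have hQ2 : poch ((l : ℝ) - ((k:ℕ)+1 : ℕ)) ((k+1) + 1) = ((l:ℝ) - k - 1) * Q := by
      rw [show (k+1) + 1 = 1 + (k+1) by ring, poch_add, hQd]
      have : ((l:ℝ) - ((k:ℕ)+1 : ℕ)) + (1:ℕ) = (l:ℝ) - k := by push_cast; ring
      rw [this]
      simp only [poch_succ, poch_zero]
      push_cast; ring
    have hApos : 0 < A := poch_pos _ hlam _
    have hBpos : 0 < B := poch_pos _ (by positivity) _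
    have hPpos : 0 < P := poch_pos _ hlam _
    have hLpos : 0 < L := poch_pos _ hlam _
    rw [hnum, hQ2, hdec2]
    have key : P * (lam + (l:ℝ) + (k:ℝ) + 1) = A * (lam + 2*(k:ℝ) + 2) * B := by
      rw [← hdec2, hdec]
    have hterm : Q / (A * B) = Q / P - ((l:ℝ) - k - 1) * Q / (P * (lam + (l:ℝ) + (k:ℝ) + 1)) := by
      have he : (0:ℝ) < lam + (l:ℝ) + (k:ℝ) + 1 := by positivity
      rw [eq_sub_iff_add_eq, div_add_div _ _ (by positivity) (by positivity),
        div_eq_div_iff (by positivity) (by positivity)]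
      linear_combination Q * P * key
    linarith [hterm]
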